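/- Uniqueness in Böttcher's Theorem: If f has a superattracting fixed point of local degree n ≥ 2 at 0 and φ₁, φ₂ are injective holomorphic maps on Δ_δ fixing 0 with φ_i^{-1} ∘ f ∘ φ_i (z) = z^n for i = 1, 2, then φ₂^{-1} = ω · φ₁^{-1} near 0 for some (n−1)-th root of unity ω. -/

import Mathlib

open Metric Complex

open Filter


lemma my_log_pow_of_arg_lt {w : ℂ} (hw : w ≠ 0) {n : ℕ}
    (h : (n : ℝ) * |w.arg| < Real.pi) :
    Complex.log (w ^ n) = n * Complex.log w := by
  suffices H : ∀ k, k ≤ n → Complex.log (w ^ k) = k * Complex.log w from H n le_rfl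
  intro k hk
  induction k with
  | zero => simp
  | succ k ih =>
    have hk' : k ≤ n := Nat.le_of_succ_le hk
    have ihk := ih hk'
    have hwk : w ^ k ≠ 0 := pow_ne_zero _ hw
    have harg : (w ^ k).arg = k * w.arg := by
      have h1 := congrArg Complex.im ihk
      rw [Complex.log_im] at h1
      simpa [Complex.log_im] using h1
    have habs : ((k : ℝ) + 1) * |w.arg| < Real.pi := by
      have h1 : ((k : ℝ) + 1) ≤ (n : ℝ) := by exact_mod_cast hk
      have h2 : (0:ℝ) ≤ |w.arg| := abs_nonneg _
      nlinarith
    have hmem : (w ^ k).arg + w.arg ∈ Set.Ioc (-Real.pi) Real.pi := by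
      rw [harg]
      have : |(k : ℝ) * w.arg + w.arg| < Real.pi := by
        have : |((k : ℝ) + 1) * w.arg| < Real.pi := by
          rw [abs_mul]
          calc |((k:ℝ)+1)| * |w.arg| = ((k:ℝ)+1) * |w.arg| := by
                rw [_root_.abs_of_nonneg (by positivity : (0:ℝ) ≤ (k:ℝ)+1)]
          _ < Real.pi := habs
        rw [add_mul, one_mul] at this
        exact this
      constructor
      · linarith [neg_abs_le ((k : ℝ) * w.arg + w.arg)]
      · linarith [le_abs_self ((k : ℝ) * w.arg + w.arg)]
    calc Complex.log (w ^ (k + 1)) = Complex.log (w ^ k * w) := by rw [pow_succ]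
    _ = Complex.log (w ^ k) + Complex.log w :=
        (Complex.log_mul_eq_add_log_iff hwk hw).mpr hmem
    _ = (k : ℂ) * Complex.log w + Complex.log w := by rw [ihk]
    _ = ((k : ℕ) + 1 : ℂ) * Complex.log w := by push_cast; ring
    _ = ((k + 1 : ℕ) : ℂ) * Complex.log w := by push_cast; ring


lemma my_theta_eq_one {θ : ℂ → ℂ} {n : ℕ} (hn : 2 ≤ n)
    (hcont : ∀ᶠ z in nhds (0:ℂ), ContinuousAt θ z) (h0 : θ 0 = 1)
    (heq : ∀ᶠ z in nhds (0:ℂ), θ (z ^ n) = θ z ^ n) :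
    ∀ᶠ z in nhds (0:ℂ), θ z = 1 := by
  have hc0 : ContinuousAt θ 0 := hcont.self_of_nhds
  have ht : Tendsto θ (nhds 0) (nhds 1) := by rw [← h0]; exact hc0
  have e1 : ∀ᶠ z in nhds (0:ℂ), θ z ∈ Complex.slitPlane :=
    ht.eventually (isOpen_slitPlane.eventually_mem one_mem_slitPlane)
  have e2 : ∀ᶠ z in nhds (0:ℂ), (n:ℝ) * |(θ z).arg| < Real.pi := by
    have hargc : ContinuousAt (fun z => (n:ℝ) * |(θ z).arg|) 0 := by
      have harg1 : ContinuousAt Complex.arg (θ 0) := by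
        rw [h0]; exact Complex.continuousAt_arg one_mem_slitPlane
      exact continuousAt_const.mul ((harg1.comp hc0).abs)
    have hval : (fun z => (n:ℝ) * |(θ z).arg|) 0 = 0 := by simp [h0, Complex.arg_one]
    have htd := hargc.tendsto
    rw [h0, Complex.arg_one, abs_zero, mul_zero] at htd
    exact htd.eventually_lt_const Real.pi_pos
  have hall : ∀ᶠ z in nhds (0:ℂ), ContinuousAt θ z ∧ θ (z ^ n) = θ z ^ n ∧
      θ z ∈ Complex.slitPlane ∧ (n:ℝ) * |(θ z).arg| < Real.pi := by
    filter_upwards [hcont, heq, e1, e2] with z a b c d using ⟨a, b, c, d⟩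
  rw [Metric.eventually_nhds_iff_ball] at hall
  obtain ⟨ε, hε, hP⟩ := hall
  set r : ℝ := min ε 1 with hrdef
  have hr0 : 0 < r := lt_min hε one_pos
  have hr1 : r ≤ 1 := min_le_right _ _
  have hsub : ball (0:ℂ) r ⊆ ball (0:ℂ) ε := ball_subset_ball (min_le_left _ _)
  have hzne : ∀ z ∈ ball (0:ℂ) r, θ z ≠ 0 := fun z hz =>
    Complex.slitPlane_ne_zero (hP z (hsub hz)).2.2.1
  have key : ∀ z ∈ ball (0:ℂ) r, Complex.log (θ (z ^ n)) = n * Complex.log (θ z) := by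
    intro z hz
    obtain ⟨_, hfe, hmem, harg⟩ := hP z (hsub hz)
    rw [hfe]
    exact my_log_pow_of_arg_lt (Complex.slitPlane_ne_zero hmem) harg
  have hpow_mem : ∀ z ∈ ball (0:ℂ) r, ∀ k : ℕ, 1 ≤ k → z ^ k ∈ ball (0:ℂ) r := by
    intro z hz k hk
    rw [mem_ball_zero_iff] at hz ⊢
    rw [norm_pow]
    calc ‖z‖ ^ k ≤ ‖z‖ := pow_le_of_le_one (norm_nonneg _) (le_trans hz.le hr1) (by omega)
    _ < r := hz
  have iter : ∀ k : ℕ, ∀ z ∈ ball (0:ℂ) r,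
      Complex.log (θ (z ^ n ^ k)) = (n:ℂ) ^ k * Complex.log (θ z) := by
    intro k
    induction k with
    | zero => intro z hz; simp
    | succ k ih =>
      intro z hz
      have hzn : z ^ n ∈ ball (0:ℂ) r := hpow_mem z hz n (by omega)
      have h1 := ih (z ^ n) hzn
      rw [← pow_mul, key z hz] at h1
      rw [show n * n ^ k = n ^ (k + 1) by ring] at h1
      rw [h1]
      push_cast
      ring
  have main : ∀ z ∈ ball (0:ℂ) r, Complex.log (θ z) = 0 := by
    intro z hz
    have hz1 : ‖z‖ < 1 := lt_of_lt_of_le (mem_ball_zero_iff.mp hz) hr1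
    have htend : Tendsto (fun k : ℕ => z ^ n ^ k) atTop (nhds 0) := by
      rw [tendsto_zero_iff_norm_tendsto_zero]
      have hb : ∀ k, ‖z ^ n ^ k‖ ≤ ‖z‖ ^ k := by
        intro k
        rw [norm_pow]
        exact pow_le_pow_of_le_one (norm_nonneg _) hz1.le
          (Nat.le_of_lt (Nat.lt_pow_self (n := k) (a := n) (by omega)))
      exact squeeze_zero (fun k => norm_nonneg _) hb
        (tendsto_pow_atTop_nhds_zero_of_lt_one (norm_nonneg z) hz1)
    have hLcont : ContinuousAt (fun w => Complex.log (θ w)) 0 :=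
      ContinuousAt.clog hc0 (by rw [h0]; exact one_mem_slitPlane)
    have h2 : Tendsto (fun k => Complex.log (θ (z ^ n ^ k))) atTop (nhds (Complex.log (θ 0))) :=
      (hLcont.tendsto).comp htend
    rw [h0, Complex.log_one] at h2
    have h3 : ∀ k : ℕ, ‖Complex.log (θ z)‖ ≤ ‖Complex.log (θ (z ^ n ^ k))‖ := by
      intro k
      have hzk : z ^ n ^ k ∈ ball (0:ℂ) r := by
        rcases Nat.eq_zero_or_pos k with h | h
        · subst h; simpa using hz
        · exact hpow_mem z hz (n ^ k) (Nat.one_le_pow _ _ (by omega))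
      rw [iter k z hz, norm_mul, norm_pow, Complex.norm_natCast]
      have h5 : (1:ℝ) ≤ (n:ℝ) ^ k := one_le_pow₀ (by exact_mod_cast (by omega : 1 ≤ n))
      exact le_mul_of_one_le_left (norm_nonneg _) h5
    have h4 : Tendsto (fun k => ‖Complex.log (θ (z ^ n ^ k))‖) atTop (nhds 0) := by
      simpa using h2.norm
    have h5 : ‖Complex.log (θ z)‖ ≤ 0 := ge_of_tendsto' h4 h3
    exact norm_le_zero_iff.mp h5
  rw [Metric.eventually_nhds_iff_ball]
  refine ⟨r, hr0, fun z hz => ?_⟩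
  have := congrArg Complex.exp (main z hz)
  rwa [Complex.exp_log (hzne z hz), Complex.exp_zero] at this


lemma my_deriv_ne_zero_of_injOn {φ : ℂ → ℂ} {δ : ℝ} (hδ : 0 < δ)
    (hφ : DifferentiableOn ℂ φ (ball (0:ℂ) δ)) (hinj : Set.InjOn φ (ball (0:ℂ) δ))
    (h0 : φ 0 = 0) : deriv φ 0 ≠ 0 := by
  have hballmem : ball (0:ℂ) δ ∈ nhds (0:ℂ) := ball_mem_nhds _ hδ
  have han : AnalyticAt ℂ φ 0 := hφ.analyticAt hballmem
  -- order is not ⊤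
  have hordne : analyticOrderAt φ 0 ≠ ⊤ := by
    intro h
    rw [analyticOrderAt_eq_top] at h
    rw [Metric.eventually_nhds_iff_ball] at h
    obtain ⟨ε, hε, h⟩ := h
    set ε' : ℝ := min ε δ with hε'def
    have hε'0 : 0 < ε' := lt_min hε hδ
    set b : ℂ := ((ε' / 2 : ℝ) : ℂ) with hbdef
    have hbmem : b ∈ ball (0:ℂ) ε' := by
      rw [mem_ball_zero_iff]
      simp only [hbdef, Complex.norm_real, Real.norm_eq_abs]
      rw [abs_of_pos (by linarith)]
      linarith
    have hb0 : (0:ℂ) ∈ ball (0:ℂ) ε' := mem_ball_self hε'0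
    have hsubε : ball (0:ℂ) ε' ⊆ ball (0:ℂ) ε := ball_subset_ball (min_le_left _ _)
    have hsubδ : ball (0:ℂ) ε' ⊆ ball (0:ℂ) δ := ball_subset_ball (min_le_right _ _)
    have : (0:ℂ) = b := hinj (hsubδ hb0) (hsubδ hbmem) (by rw [h 0 (hsubε hb0), h b (hsubε hbmem)])
    have : b ≠ 0 := by
      simp only [hbdef, ne_eq, Complex.ofReal_eq_zero]
      positivity
    simp_all
  obtain ⟨m, hm⟩ : ∃ m : ℕ, analyticOrderAt φ 0 = m := by
    cases h : analyticOrderAt φ 0 with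
    | top => exact absurd h hordne
    | coe m => exact ⟨m, rfl⟩
  obtain ⟨η, hηan, hη0, hfac⟩ := (han.analyticOrderAt_eq_natCast (n := m)).mp hm
  simp only [sub_zero, smul_eq_mul] at hfac
  have hm0 : m ≠ 0 := by
    intro h
    subst h
    have := hfac.self_of_nhds
    simp [h0] at this
    exact hη0 this.symm
  by_contra hd
  -- m ≥ 2
  have hm2 : 2 ≤ m := by
    by_contra h
    have hm1 : m = 1 := by omega
    subst hm1
    have hdφ : deriv φ 0 = η 0 := by
      have h1 : deriv φ 0 = deriv (fun z => z ^ 1 * η z) 0 :=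
        Filter.EventuallyEq.deriv_eq hfac
      have h2 : HasDerivAt (fun z : ℂ => z ^ 1 * η z) (1 * η 0 + 0 * deriv η 0) 0 := by
        have h3 : HasDerivAt (fun z : ℂ => z * η z) (1 * η 0 + 0 * deriv η 0) 0 :=
          (hasDerivAt_id (0:ℂ)).mul hηan.differentiableAt.hasDerivAt
        simpa using h3
      rw [h1, h2.deriv]
      ring
    rw [hdφ] at hd
    exact hη0 hd
  -- m-th root of η
  set c : ℂ := (η 0) ^ ((m:ℂ)⁻¹) with hcdef
  have hcm : c ^ m = η 0 := Complex.cpow_nat_inv_pow _ hm0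
  have hcne : c ≠ 0 := by
    intro h
    apply hη0
    rw [← hcm, h, zero_pow hm0]
  set u : ℂ → ℂ := fun z => c * Complex.exp (Complex.log (η z / η 0) / m) with hudef
  have hu0 : u 0 = c := by
    simp [hudef, div_self hη0, Complex.log_one]
  have hηne : ∀ᶠ z in nhds (0:ℂ), η z ≠ 0 := hηan.continuousAt.eventually_ne hη0
  have hum : ∀ᶠ z in nhds (0:ℂ), u z ^ m = η z := by
    filter_upwards [hηne] with z hz
    have hmC : (m:ℂ) ≠ 0 := Nat.cast_ne_zero.mpr hm0
    rw [hudef]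
    simp only [mul_pow, hcm]
    rw [← Complex.exp_nat_mul, mul_div_cancel₀ _ hmC,
      Complex.exp_log (div_ne_zero hz hη0), mul_div_cancel₀ _ hη0]
  -- strict derivative of v := z * u z at 0 is c ≠ 0
  have hηsd : HasStrictDerivAt η (fderiv ℂ η 0 1) 0 := hηan.hasStrictFDerivAt.hasStrictDerivAt
  have hlogsd : HasStrictDerivAt (fun z => Complex.log (η z / η 0))
      ((fderiv ℂ η 0 1 / η 0) / ((fun z => η z / η 0) 0)) 0 := by
    apply HasStrictDerivAt.clog (hηsd.div_const (η 0))
    simp [div_self hη0]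
  have husd : HasStrictDerivAt u _ 0 := ((hlogsd.div_const (m:ℂ)).cexp.const_mul c)
  have hvsd : HasStrictDerivAt (fun z : ℂ => z * u z) c 0 := by
    have : HasStrictDerivAt (fun z : ℂ => z * u z) (1 * u 0 + 0 * _) 0 :=
      (hasStrictDerivAt_id (0:ℂ)).mul husd
    simpa [hu0] using this
  have hmap : Filter.map (fun z : ℂ => z * u z) (nhds 0) = nhds 0 := by
    have := hvsd.map_nhds_eq hcne
    simpa using this
  -- ε ball where φ z = (z * u z)^m and z ∈ ball δ
  have hφv : ∀ᶠ z in nhds (0:ℂ), φ z = (z * u z) ^ m ∧ z ∈ ball (0:ℂ) δ := by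
    filter_upwards [hfac, hum, hballmem] with z h1 h2 h3
    refine ⟨?_, h3⟩
    rw [h1, mul_pow, h2]
  rw [Metric.eventually_nhds_iff_ball] at hφv
  obtain ⟨ε, hε0, hεP⟩ := hφv
  have himg : (fun z : ℂ => z * u z) '' (ball (0:ℂ) ε) ∈ nhds (0:ℂ) := by
    have := Filter.image_mem_map (m := fun z : ℂ => z * u z)
      (ball_mem_nhds (0:ℂ) hε0)
    rwa [hmap] at this
  obtain ⟨ρ, hρ0, hρ⟩ := Metric.mem_nhds_iff.mp himg
  set ζ : ℂ := Complex.exp (2 * Real.pi * Complex.I / m) with hζdef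
  have hprim := Complex.isPrimitiveRoot_exp m hm0
  have hζm : ζ ^ m = 1 := hprim.pow_eq_one
  have hζ1 : ζ ≠ 1 := hprim.ne_one (by omega)
  have hζnorm : ‖ζ‖ = 1 := Complex.norm_eq_one_of_pow_eq_one hζm hm0
  set w : ℂ := ((ρ / 2 : ℝ) : ℂ) with hwdef
  have hw0 : w ≠ 0 := by
    simp only [hwdef, ne_eq, Complex.ofReal_eq_zero]
    positivity
  have hwnorm : ‖w‖ = ρ / 2 := by
    simp only [hwdef, Complex.norm_real, Real.norm_eq_abs]
    rw [abs_of_pos (by linarith)]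
  have hwmem : w ∈ ball (0:ℂ) ρ := by
    rw [mem_ball_zero_iff, hwnorm]; linarith
  have hζwmem : ζ * w ∈ ball (0:ℂ) ρ := by
    rw [mem_ball_zero_iff, norm_mul, hζnorm, one_mul, hwnorm]; linarith
  obtain ⟨z₁, hz₁mem, hz₁'⟩ := hρ hwmem
  obtain ⟨z₂, hz₂mem, hz₂'⟩ := hρ hζwmem
  have hz₁ : z₁ * u z₁ = w := hz₁'
  have hz₂ : z₂ * u z₂ = ζ * w := hz₂'
  have hne : z₁ ≠ z₂ := by
    intro h
    rw [h, hz₂] at hz₁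
    have hzw : (ζ - 1) * w = 0 := by linear_combination hz₁
    rcases mul_eq_zero.mp hzw with h' | h'
    · exact hζ1 (sub_eq_zero.mp h')
    · exact hw0 h'
  have hφeq : φ z₁ = φ z₂ := by
    rw [(hεP z₁ hz₁mem).1, (hεP z₂ hz₂mem).1, hz₁, hz₂, mul_pow, hζm, one_mul]
  exact hne (hinj (hεP z₁ hz₁mem).2 (hεP z₂ hz₂mem).2 hφeq)


theorem boettcher_uniqueness
    (f g : ℂ → ℂ) (δ₀ δ : ℝ) (hδ₀ : 0 < δ₀) (hδ : 0 < δ)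
    (n : ℕ) (hn : 2 ≤ n)
    (hg : DifferentiableOn ℂ g (ball (0:ℂ) δ₀))
    (hg0 : g 0 ≠ 0)
    (hf : ∀ z ∈ ball (0:ℂ) δ₀, f z = z ^ n * g z)
    (φ₁ φ₂ : ℂ → ℂ)
    (hφ₁ : DifferentiableOn ℂ φ₁ (ball (0:ℂ) δ))
    (hφ₂ : DifferentiableOn ℂ φ₂ (ball (0:ℂ) δ))
    (hinj₁ : Set.InjOn φ₁ (ball (0:ℂ) δ))
    (hinj₂ : Set.InjOn φ₂ (ball (0:ℂ) δ))
    (h₁0 : φ₁ 0 = 0) (h₂0 : φ₂ 0 = 0)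
    (hconj₁ : ∀ z ∈ ball (0:ℂ) δ, f (φ₁ z) = φ₁ (z ^ n))
    (hconj₂ : ∀ z ∈ ball (0:ℂ) δ, f (φ₂ z) = φ₂ (z ^ n)) :
    ∃ ω : ℂ, ω ^ (n - 1) = 1 ∧ ∃ ε : ℝ, 0 < ε ∧
      ∀ z ∈ ball (0:ℂ) ε, φ₁ z = φ₂ (ω * z) := by
  have hn0 : n ≠ 0 := by omega
  have hballδ : ball (0:ℂ) δ ∈ nhds (0:ℂ) := ball_mem_nhds _ hδ
  have hballev : ∀ᶠ z in nhds (0:ℂ), z ∈ ball (0:ℂ) δ := hballδ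
  have han₁ : AnalyticAt ℂ φ₁ 0 := hφ₁.analyticAt hballδ
  have han₂ : AnalyticAt ℂ φ₂ 0 := hφ₂.analyticAt hballδ
  have hd₂ : deriv φ₂ 0 ≠ 0 := my_deriv_ne_zero_of_injOn hδ hφ₂ hinj₂ h₂0
  have hsd₂ : HasStrictDerivAt φ₂ (deriv φ₂ 0) 0 := by
    have h := han₂.hasStrictFDerivAt.hasStrictDerivAt
    rwa [fderiv_apply_one_eq_deriv] at h
  have hFsd := hsd₂.hasStrictFDerivAt_equiv hd₂
  set F := hFsd.toOpenPartialHomeomorph φ₂ with hFdef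
  have hFcoe : (F : ℂ → ℂ) = φ₂ := hFsd.toOpenPartialHomeomorph_coe
  have hFsource : (0:ℂ) ∈ F.source := hFsd.mem_toOpenPartialHomeomorph_source
  have hF0 : F 0 = 0 := by rw [show (F : ℂ → ℂ) 0 = φ₂ 0 by rw [hFcoe]]; exact h₂0
  have hχan : AnalyticAt ℂ (F.symm : ℂ → ℂ) 0 := by
    have h := F.analyticAt_symm' hFsource (by rw [hFcoe]; exact han₂)
      (by rw [hFcoe]; exact hFsd.hasFDerivAt.fderiv)
    rwa [hF0] at h
  have hleft : ∀ᶠ z in nhds (0:ℂ), F.symm (φ₂ z) = z := by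
    have h := F.eventually_left_inverse hFsource
    filter_upwards [h] with z hz
    rw [← hFcoe]
    exact hz
  have hright : ∀ᶠ w in nhds (0:ℂ), φ₂ (F.symm w) = w := by
    have h := F.eventually_right_inverse' hFsource
    rw [show (F : ℂ → ℂ) 0 = (0:ℂ) from hF0] at h
    filter_upwards [h] with w hw
    rw [← hFcoe]
    exact hw
  set ψ : ℂ → ℂ := fun z => F.symm (φ₁ z) with hψdef
  have hψan : AnalyticAt ℂ ψ 0 := by
    have hχan' : AnalyticAt ℂ (F.symm : ℂ → ℂ) (φ₁ 0) := by rw [h₁0]; exact hχan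
    exact hχan'.comp han₁
  have hψ0 : ψ 0 = 0 := by
    have h := hleft.self_of_nhds
    rw [h₂0] at h
    simp only [hψdef, h₁0]
    exact h
  have htend₁ : Tendsto φ₁ (nhds 0) (nhds 0) := by
    have := han₁.continuousAt.tendsto; rwa [h₁0] at this
  have hφ₂ψ : ∀ᶠ z in nhds (0:ℂ), φ₂ (ψ z) = φ₁ z := by
    filter_upwards [htend₁.eventually hright] with z hz using hz
  have htendψ : Tendsto ψ (nhds 0) (nhds 0) := by
    have := hψan.continuousAt.tendsto; rwa [hψ0] at this
  have htendpow : Tendsto (fun z : ℂ => z ^ n) (nhds 0) (nhds 0) := by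
    have h : Tendsto (fun z : ℂ => z ^ n) (nhds 0) (nhds ((0:ℂ) ^ n)) :=
      (continuous_pow n (M := ℂ)).tendsto 0
    rwa [zero_pow hn0] at h
  have htendψpow : Tendsto (fun z : ℂ => ψ (z ^ n)) (nhds 0) (nhds 0) := htendψ.comp htendpow
  have htendψn : Tendsto (fun z : ℂ => (ψ z) ^ n) (nhds 0) (nhds 0) := htendpow.comp htendψ
  have hψeq : ∀ᶠ z in nhds (0:ℂ), ψ (z ^ n) = (ψ z) ^ n := by
    filter_upwards [hballev, htendψ.eventually hballev, htendψpow.eventually hballev,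
      htendψn.eventually hballev, hφ₂ψ, htendpow.eventually hφ₂ψ] with z hz hψz hψpz hψnz h1 h2
    apply hinj₂ hψpz hψnz
    calc φ₂ (ψ (z ^ n)) = φ₁ (z ^ n) := h2
    _ = f (φ₁ z) := (hconj₁ z hz).symm
    _ = f (φ₂ (ψ z)) := by rw [h1]
    _ = φ₂ ((ψ z) ^ n) := hconj₂ (ψ z) hψz
  -- ψ is injective near 0
  obtain ⟨ε₁, hε₁0, hψinj⟩ : ∃ ε > 0, Set.InjOn ψ (ball (0:ℂ) ε) := by
    have h := hφ₂ψ.and hballev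
    rw [Metric.eventually_nhds_iff_ball] at h
    obtain ⟨ε, hε0, hε⟩ := h
    refine ⟨ε, hε0, fun a ha b hb hab => ?_⟩
    exact hinj₁ (hε a ha).2 (hε b hb).2 (by rw [← (hε a ha).1, ← (hε b hb).1, hab])
  -- order of ψ
  have hordne : analyticOrderAt ψ 0 ≠ ⊤ := by
    intro h
    rw [analyticOrderAt_eq_top, Metric.eventually_nhds_iff_ball] at h
    obtain ⟨ε, hε, h⟩ := h
    set ε' : ℝ := min ε ε₁ with hε'def
    have hε'0 : 0 < ε' := lt_min hε hε₁0
    set b : ℂ := ((ε' / 2 : ℝ) : ℂ) with hbdef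
    have hbmem : b ∈ ball (0:ℂ) ε' := by
      rw [mem_ball_zero_iff]
      simp only [hbdef, Complex.norm_real, Real.norm_eq_abs]
      rw [abs_of_pos (by linarith)]
      linarith
    have hb0mem : (0:ℂ) ∈ ball (0:ℂ) ε' := mem_ball_self hε'0
    have hsubε : ball (0:ℂ) ε' ⊆ ball (0:ℂ) ε := ball_subset_ball (min_le_left _ _)
    have hsubε₁ : ball (0:ℂ) ε' ⊆ ball (0:ℂ) ε₁ := ball_subset_ball (min_le_right _ _)
    have heq0 : (0:ℂ) = b := hψinj (hsubε₁ hb0mem) (hsubε₁ hbmem)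
      (by rw [h 0 (hsubε hb0mem), h b (hsubε hbmem)])
    have : b ≠ 0 := by
      simp only [hbdef, ne_eq, Complex.ofReal_eq_zero]
      positivity
    simp_all
  obtain ⟨m, hm⟩ : ∃ m : ℕ, analyticOrderAt ψ 0 = m := by
    cases h : analyticOrderAt ψ 0 with
    | top => exact absurd h hordne
    | coe m => exact ⟨m, rfl⟩
  obtain ⟨η, hηan, hη0, hfac⟩ := (hψan.analyticOrderAt_eq_natCast (n := m)).mp hm
  simp only [sub_zero, smul_eq_mul] at hfac
  have hm0 : m ≠ 0 := by
    intro h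
    subst h
    have := hfac.self_of_nhds
    simp [hψ0] at this
    exact hη0 this.symm
  -- functional equation for η away from 0
  have hηfe' : ∀ᶠ z in nhds (0:ℂ), z ≠ 0 → η (z ^ n) = (η z) ^ n := by
    filter_upwards [hfac, htendpow.eventually hfac, hψeq] with z h1 h2 h3
    intro hz0
    have key : (z ^ n) ^ m * η (z ^ n) = (z ^ m * η z) ^ n := by rw [← h2, h3, h1]
    have hzn : (z : ℂ) ^ (n * m) ≠ 0 := pow_ne_zero _ hz0
    apply mul_left_cancel₀ hzn
    calc z ^ (n * m) * η (z ^ n) = (z ^ n) ^ m * η (z ^ n) := by rw [pow_mul]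
    _ = (z ^ m * η z) ^ n := key
    _ = z ^ (n * m) * (η z) ^ n := by rw [mul_pow, ← pow_mul, mul_comm m n]
  have hη0n : η 0 = (η 0) ^ n := by
    have hcη : ContinuousAt η 0 := hηan.continuousAt
    have t1 : Tendsto (fun z : ℂ => η (z ^ n)) (nhdsWithin 0 {(0:ℂ)}ᶜ) (nhds (η 0)) :=
      ((hcη.tendsto.comp htendpow)).mono_left nhdsWithin_le_nhds
    have t2 : Tendsto (fun z : ℂ => (η z) ^ n) (nhdsWithin 0 {(0:ℂ)}ᶜ) (nhds ((η 0) ^ n)) :=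
      ((hcη.tendsto.pow n)).mono_left nhdsWithin_le_nhds
    have h_eq : (fun z : ℂ => η (z ^ n)) =ᶠ[nhdsWithin 0 {(0:ℂ)}ᶜ] (fun z => (η z) ^ n) := by
      have h' := hηfe'.filter_mono (nhdsWithin_le_nhds (s := {(0:ℂ)}ᶜ))
      filter_upwards [h', self_mem_nhdsWithin] with z h hz
      exact h hz
    exact tendsto_nhds_unique (t1.congr' h_eq) t2
  set c : ℂ := η 0 with hcdef
  have hcne : c ≠ 0 := hη0
  have hcpow : c ^ (n - 1) = 1 := by
    have h1 : c ^ (n - 1) * c = 1 * c := by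
      rw [one_mul, ← pow_succ, show n - 1 + 1 = n by omega]
      exact hη0n.symm
    exact mul_right_cancel₀ hcne h1
  have hηfe : ∀ᶠ z in nhds (0:ℂ), η (z ^ n) = (η z) ^ n := by
    filter_upwards [hηfe'] with z h
    by_cases hz : z = 0
    · subst hz; rw [zero_pow hn0]; exact hη0n
    · exact h hz
  have hθ : ∀ᶠ z in nhds (0:ℂ), η z / c = 1 := by
    apply my_theta_eq_one hn
    · filter_upwards [hηan.eventually_analyticAt] with z hz
      exact hz.continuousAt.div_const c
    · exact div_self hcne
    · filter_upwards [hηfe] with z h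
      rw [h, div_pow, ← hη0n]
  have hηc : ∀ᶠ z in nhds (0:ℂ), η z = c := by
    filter_upwards [hθ] with z h
    exact (div_eq_one_iff_eq hcne).mp h
  have hψc : ∀ᶠ z in nhds (0:ℂ), ψ z = c * z ^ m := by
    filter_upwards [hfac, hηc] with z h1 h2
    rw [h1, h2]; ring
  -- m = 1
  have hm1 : m = 1 := by
    by_contra h
    have hm2 : 2 ≤ m := by omega
    have h2 := hψc
    rw [Metric.eventually_nhds_iff_ball] at h2
    obtain ⟨ε₂, hε₂0, hε₂⟩ := h2
    set ε₃ : ℝ := min ε₂ ε₁ with hε₃def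
    have hε₃0 : 0 < ε₃ := lt_min hε₂0 hε₁0
    set ζ : ℂ := Complex.exp (2 * Real.pi * Complex.I / m) with hζdef
    have hprim := Complex.isPrimitiveRoot_exp m hm0
    have hζm : ζ ^ m = 1 := hprim.pow_eq_one
    have hζ1 : ζ ≠ 1 := hprim.ne_one (by omega)
    have hζnorm : ‖ζ‖ = 1 := Complex.norm_eq_one_of_pow_eq_one hζm hm0
    set x : ℂ := ((ε₃ / 2 : ℝ) : ℂ) with hxdef
    have hx0 : x ≠ 0 := by
      simp only [hxdef, ne_eq, Complex.ofReal_eq_zero]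
      positivity
    have hxnorm : ‖x‖ = ε₃ / 2 := by
      simp only [hxdef, Complex.norm_real, Real.norm_eq_abs]
      rw [abs_of_pos (by linarith)]
    have hxmem : x ∈ ball (0:ℂ) ε₃ := by rw [mem_ball_zero_iff, hxnorm]; linarith
    have hζxmem : ζ * x ∈ ball (0:ℂ) ε₃ := by
      rw [mem_ball_zero_iff, norm_mul, hζnorm, one_mul, hxnorm]; linarith
    have hsubε₂ : ball (0:ℂ) ε₃ ⊆ ball (0:ℂ) ε₂ := ball_subset_ball (min_le_left _ _)
    have hsubε₁' : ball (0:ℂ) ε₃ ⊆ ball (0:ℂ) ε₁ := ball_subset_ball (min_le_right _ _)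
    have hψx : ψ x = ψ (ζ * x) := by
      rw [hε₂ x (hsubε₂ hxmem), hε₂ (ζ * x) (hsubε₂ hζxmem), mul_pow, hζm, one_mul]
    have := hψinj (hsubε₁' hxmem) (hsubε₁' hζxmem) hψx
    apply hζ1
    have h3 : (ζ - 1) * x = 0 := by linear_combination -this
    rcases mul_eq_zero.mp h3 with h' | h'
    · exact sub_eq_zero.mp h'
    · exact absurd h' hx0
  -- conclusion
  refine ⟨c, hcpow, ?_⟩
  have hfin : ∀ᶠ z in nhds (0:ℂ), φ₁ z = φ₂ (c * z) := by
    filter_upwards [hφ₂ψ, hψc] with z h1 h2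
    rw [← h1, h2, hm1, pow_one]
  rw [Metric.eventually_nhds_iff_ball] at hfin
  obtain ⟨ε, hε0, hε⟩ := hfin
  exact ⟨ε, hε0, hε⟩
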